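/- Let K be the group of all permutations a of ℕ such that, for some n, a preserves each block J_i of a fixed partition 𝒥 = {J_i} for all i > n (where the J_i are finite sets of strictly increasing cardinality partitioning ℕ), topologized as the increasing union of the compact groups Kₙ = S^n × S_{n+1} × S_{n+2} × ⋯. Suppose a ∈ K contains a copy of every finite permutation: for every n and every permutation π of J¹∪⋯∪Jⁿ there exist k and an injection β : J¹∪⋯∪Jⁿ → J_{n+k} with β ∘ π = a ∘ β on J¹∪⋯∪Jⁿ. Then the conjugacy class of a is dense in K. In particular K has the Rohlin property (a dense conjugacy class). -/

import Mathlib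

private lemma block_rev (J : ℕ → Finset ℕ) (e : Equiv.Perm ℕ) (i : ℕ)
    (h : ∀ m ∈ J i, e m ∈ J i) : ∀ m, e m ∈ J i → m ∈ J i := by
  have himg : (J i).image e = J i :=
    Finset.eq_of_subset_of_card_le (Finset.image_subset_iff.2 h)
      (le_of_eq (Finset.card_image_of_injective _ e.injective).symm)
  intro m hm
  rw [← himg] at hm
  obtain ⟨m', hm', he⟩ := Finset.mem_image.1 hm
  rwa [← e.injective he]

private lemma mem_big (J : ℕ → Finset ℕ) (hpart : ∀ m : ℕ, ∃! i, m ∈ J i)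
    (e : Equiv.Perm ℕ) (n L : ℕ) (hnL : n ≤ L)
    (h : ∀ i, n < i → ∀ m ∈ J i, e m ∈ J i) :
    ∀ m ∈ (Finset.range (L + 1)).biUnion J, e m ∈ (Finset.range (L + 1)).biUnion J := by
  intro m hm
  obtain ⟨i, hi, hmi⟩ := Finset.mem_biUnion.1 hm
  obtain ⟨j, hj, -⟩ := hpart (e m)
  refine Finset.mem_biUnion.2 ⟨j, ?_, hj⟩
  rw [Finset.mem_range] at hi ⊢
  by_contra hjL
  push_neg at hjL
  have hjn : n < j := by omega
  have h2 : m ∈ J j := block_rev J e j (h j hjn) m hj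
  have h3 := (hpart m).unique hmi h2
  omega

theorem stmt_19 (J : ℕ → Finset ℕ) (hne : ∀ i, (J i).Nonempty)
    (hcard : StrictMono fun i => (J i).card)
    (hpart : ∀ m : ℕ, ∃! i, m ∈ J i)
    -- `K` is the group of permutations of `ℕ` preserving all blocks `J i`
    -- beyond some `n`, i.e. `K = ⋃ₙ Kₙ` with `Kₙ = Sⁿ × S_{n+1} × S_{n+2} × ⋯`.
    (K : Set (Equiv.Perm ℕ))
    (hK : K = {a : Equiv.Perm ℕ | ∃ n : ℕ, ∀ i : ℕ, n < i → ∀ m ∈ J i, a m ∈ J i})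
    -- the inductive topology on `K`, generated by its basic clopen sets `K(π)`,
    -- for `π` a permutation of `Jⁿ = J 0 ∪ ⋯ ∪ J n` (fixing everything else):
    -- `K(π) = {a ∈ Kₙ : a` agrees with `π` on `Jⁿ}`.
    (t : TopologicalSpace ↥K)
    (ht : t = TopologicalSpace.generateFrom
      {S : Set ↥K | ∃ (n : ℕ) (π : Equiv.Perm ℕ),
        (∀ m ∉ (Finset.range (n + 1)).biUnion J, π m = m) ∧
        S = {a : ↥K | (∀ i : ℕ, n < i → ∀ m ∈ J i, (a : Equiv.Perm ℕ) m ∈ J i) ∧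
          ∀ m ∈ (Finset.range (n + 1)).biUnion J, (a : Equiv.Perm ℕ) m = π m}})
    (a : Equiv.Perm ℕ) (ha : a ∈ K)
    -- `a` contains a copy of every finite permutation `π ∈ Sⁿ`:
    (hcopy : ∀ (n : ℕ) (π : Equiv.Perm ℕ),
      (∀ m ∉ (Finset.range (n + 1)).biUnion J, π m = m) →
      ∃ (k : ℕ) (β : ℕ → ℕ), 0 < k ∧
        Set.InjOn β ((Finset.range (n + 1)).biUnion J : Set ℕ) ∧
        (∀ m ∈ (Finset.range (n + 1)).biUnion J, β m ∈ J (n + k)) ∧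
        (∀ m ∈ (Finset.range (n + 1)).biUnion J, β (π m) = a (β m))) :
    -- then the conjugacy class of `a` in `K` is dense in `K`.
    @Dense ↥K t {c : ↥K | ∃ b ∈ K, (c : Equiv.Perm ℕ) = b * a * b⁻¹} := by
  classical
  subst hK
  have hbasis := TopologicalSpace.isTopologicalBasis_of_subbasis ht
  rw [hbasis.dense_iff]
  rintro o ⟨f, ⟨hfin, hsub⟩, rfl⟩ ⟨c', hc'⟩
  choose nS πS hfixS hSeq using fun S : f => hsub S.2
  obtain ⟨na, hna⟩ := ha
  obtain ⟨nc, hnc⟩ := c'.2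
  haveI := hfin.to_subtype
  obtain ⟨L0, hL0⟩ := Finite.exists_le nS
  set L : ℕ := max L0 (max na nc) with hLdef
  have hnaL : na ≤ L := le_trans (le_max_left _ _) (le_max_right _ _)
  have hncL : nc ≤ L := le_trans (le_max_right _ _) (le_max_right _ _)
  set A : Finset ℕ := (Finset.range (L + 1)).biUnion J with hAdef
  have hnotA : ∀ i, L < i → ∀ m ∈ J i, m ∉ A := by
    intro i hi m hmi hmA
    obtain ⟨j, hj, hmj⟩ := Finset.mem_biUnion.1 hmA
    have := (hpart m).unique hmj hmi
    rw [Finset.mem_range] at hj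
    omega
  -- facts about c'
  have hcA : ∀ m ∈ A, (c' : Equiv.Perm ℕ) m ∈ A := mem_big J hpart _ nc L hncL hnc
  have hcAinv : ∀ m ∈ A, ((c' : Equiv.Perm ℕ))⁻¹ m ∈ A := by
    have himg : A.image (c' : Equiv.Perm ℕ) = A :=
      Finset.eq_of_subset_of_card_le (Finset.image_subset_iff.2 hcA)
        (le_of_eq (Finset.card_image_of_injective _ (Equiv.injective _)).symm)
    intro m hm
    rw [← himg] at hm
    obtain ⟨m', h1, h2⟩ := Finset.mem_image.1 hm
    rw [← h2, Equiv.Perm.coe_inv, Equiv.symm_apply_apply]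
    exact h1
  -- the target permutation π : equals c' on A, identity elsewhere
  set π : Equiv.Perm ℕ :=
    { toFun := fun m => if m ∈ A then (c' : Equiv.Perm ℕ) m else m
      invFun := fun m => if m ∈ A then ((c' : Equiv.Perm ℕ))⁻¹ m else m
      left_inv := by
        intro m
        by_cases h : m ∈ A
        · simp only [if_pos h, if_pos (hcA m h), Equiv.Perm.coe_inv, Equiv.symm_apply_apply]
        · simp only [if_neg h]
      right_inv := by
        intro m
        by_cases h : m ∈ A
        · simp only [if_pos h]; rw [if_pos (hcAinv m h), Equiv.Perm.coe_inv, Equiv.apply_symm_apply]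
        · simp only [if_neg h] } with hπdef
  have hπA : ∀ m ∈ A, π m = (c' : Equiv.Perm ℕ) m := by
    intro m hm
    simp only [hπdef, Equiv.coe_fn_mk, if_pos hm]
  have hπfix : ∀ m ∉ A, π m = m := by
    intro m hm
    simp only [hπdef, Equiv.coe_fn_mk, if_neg hm]
  have hπmapsA : ∀ m ∈ A, π m ∈ A := by
    intro m hm; rw [hπA m hm]; exact hcA m hm
  obtain ⟨k, β, hk, hinjβ, hβmem, hβcomm⟩ := hcopy L π hπfix
  set B : Finset ℕ := A.image β with hBdef
  have hBk : ∀ m ∈ B, m ∈ J (L + k) := by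
    intro m hm
    obtain ⟨x, hx, rfl⟩ := Finset.mem_image.1 hm
    exact hβmem x hx
  have hABdisj : ∀ m ∈ A, m ∉ B := by
    intro m hmA hmB
    exact hnotA (L + k) (by omega) m (hBk m hmB) hmA
  have hβB : ∀ m ∈ A, β m ∈ B := fun m hm => Finset.mem_image_of_mem β hm
  have hβinv1 : ∀ m ∈ A, Function.invFunOn β ↑A (β m) = m := by
    intro m hm
    have h1 : ∃ x ∈ (↑A : Set ℕ), β x = β m := ⟨m, hm, rfl⟩
    exact hinjβ (Function.invFunOn_mem h1) hm (Function.invFunOn_eq h1)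
  have hβinv2 : ∀ m ∈ B, Function.invFunOn β ↑A m ∈ A ∧ β (Function.invFunOn β ↑A m) = m := by
    intro m hm
    obtain ⟨x, hx, rfl⟩ := Finset.mem_image.1 hm
    rw [hβinv1 x hx]
    exact ⟨hx, rfl⟩
  -- the conjugating involution g
  set g : ℕ → ℕ := fun m =>
    if m ∈ A then β m else if m ∈ B then Function.invFunOn β ↑A m else m with hgdef
  have hgA : ∀ m ∈ A, g m = β m := by
    intro m hm; simp only [hgdef]; rw [if_pos hm]
  have hgB : ∀ m ∈ B, g m = Function.invFunOn β ↑A m := by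
    intro m hm; simp only [hgdef]
    rw [if_neg (fun h => hABdisj m h hm), if_pos hm]
  have hgid : ∀ m, m ∉ A → m ∉ B → g m = m := by
    intro m h1 h2; simp only [hgdef]; rw [if_neg h1, if_neg h2]
  have hginv : Function.Involutive g := by
    intro m
    by_cases h1 : m ∈ A
    · rw [hgA m h1, hgB _ (hβB m h1), hβinv1 m h1]
    · by_cases h2 : m ∈ B
      · obtain ⟨h3, h4⟩ := hβinv2 m h2
        rw [hgB m h2, hgA _ h3, h4]
      · rw [hgid m h1 h2, hgid m h1 h2]
  set b : Equiv.Perm ℕ := ⟨g, g, hginv.leftInverse, hginv.rightInverse⟩ with hbdef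
  have hbap : ∀ m, b m = g m := fun m => rfl
  have hbinv : ∀ m, b⁻¹ m = g m := fun m => rfl
  set d : Equiv.Perm ℕ := b * a * b⁻¹ with hddef
  have hdap : ∀ m, d m = b (a (b⁻¹ m)) := fun m => rfl
  -- facts about a
  have haL : ∀ i, L < i → ∀ m ∈ J i, a m ∈ J i := fun i hi => hna i (by omega)
  have haA : ∀ m ∈ A, a m ∈ A := mem_big J hpart a na L hnaL hna
  have haB : ∀ m ∈ B, a m ∈ B := by
    intro m hm
    obtain ⟨x, hx, rfl⟩ := Finset.mem_image.1 hm
    rw [← hβcomm x hx]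
    exact hβB _ (hπmapsA x hx)
  have haB' : ∀ m, a m ∈ B → m ∈ B := by
    have himg : B.image a = B :=
      Finset.eq_of_subset_of_card_le (Finset.image_subset_iff.2 haB)
        (le_of_eq (Finset.card_image_of_injective _ a.injective).symm)
    intro m hm
    rw [← himg] at hm
    obtain ⟨x, hx, he⟩ := Finset.mem_image.1 hm
    rwa [← a.injective he]
  have hanotA : ∀ i, L < i → ∀ m ∈ J i, a m ∉ A := fun i hi m hm =>
    hnotA i hi _ (haL i hi m hm)
  -- d agrees with π (hence with c') on A
  have hdA : ∀ m ∈ A, d m = π m := by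
    intro m hm
    rw [hdap, hbinv, hgA m hm, ← hβcomm m hm, hbap,
      hgB _ (hβB _ (hπmapsA m hm)), hβinv1 _ (hπmapsA m hm)]
  -- d preserves all blocks beyond L
  have hdhigh : ∀ i, L < i → ∀ m ∈ J i, d m ∈ J i := by
    intro i hi m hmi
    have hmA : m ∉ A := hnotA i hi m hmi
    by_cases hik : i = L + k
    · subst hik
      by_cases hmB : m ∈ B
      · obtain ⟨h3, h4⟩ := hβinv2 m hmB
        rw [hdap, hbinv, hgB m hmB, hbap, hgA _ (haA _ h3)]
        exact hBk _ (hβB _ (haA _ h3))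
      · have h5 : a m ∉ B := fun h => hmB (haB' m h)
        have h6 : a m ∉ A := hanotA _ hi m hmi
        rw [hdap, hbinv, hgid m hmA hmB, hbap, hgid _ h6 h5]
        exact haL _ hi m hmi
    · have hmB : m ∉ B := fun h => by
        have := (hpart m).unique (hBk m h) hmi; omega
      have h6 : a m ∉ A := hanotA _ hi m hmi
      have h7 : a m ∉ B := fun h => by
        have := (hpart (a m)).unique (hBk _ h) (haL i hi m hmi); omega
      rw [hdap, hbinv, hgid m hmA hmB, hbap, hgid _ h6 h7]
      exact haL i hi m hmi
  -- b and d lie in K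
  have hbK : b ∈ {a : Equiv.Perm ℕ | ∃ n : ℕ, ∀ i : ℕ, n < i → ∀ m ∈ J i, a m ∈ J i} := by
    refine ⟨L + k, fun i hi m hmi => ?_⟩
    have h1 : m ∉ A := hnotA i (by omega) m hmi
    have h2 : m ∉ B := fun h => by
      have := (hpart m).unique (hBk m h) hmi; omega
    rw [hbap, hgid m h1 h2]; exact hmi
  have hdK : d ∈ {a : Equiv.Perm ℕ | ∃ n : ℕ, ∀ i : ℕ, n < i → ∀ m ∈ J i, a m ∈ J i} :=
    ⟨L, hdhigh⟩
  refine ⟨⟨d, hdK⟩, ?_, b, hbK, hddef⟩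
  intro S hS
  have hc'S : c' ∈ S := hc' S hS
  have hmem := Set.ext_iff.mp (hSeq ⟨S, hS⟩)
  obtain ⟨hc1, hc2⟩ := (hmem c').mp hc'S
  have hnSL : nS ⟨S, hS⟩ ≤ L := le_trans (hL0 _) (le_max_left _ _)
  have hsubA : ∀ m ∈ (Finset.range (nS ⟨S, hS⟩ + 1)).biUnion J, m ∈ A := by
    intro m hm
    obtain ⟨j, hj, hmj⟩ := Finset.mem_biUnion.1 hm
    rw [Finset.mem_range] at hj
    exact Finset.mem_biUnion.2 ⟨j, Finset.mem_range.2 (by omega), hmj⟩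
  refine (hmem ⟨d, hdK⟩).mpr ⟨?_, ?_⟩
  · intro i hi m hmi
    by_cases hiL : L < i
    · exact hdhigh i hiL m hmi
    · push_neg at hiL
      have hmA : m ∈ A := Finset.mem_biUnion.2 ⟨i, Finset.mem_range.2 (by omega), hmi⟩
      rw [hdA m hmA, hπA m hmA]
      exact hc1 i hi m hmi
  · intro m hm
    have hmA := hsubA m hm
    rw [hdA m hmA, hπA m hmA]
    exact hc2 m hm
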